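/- arXiv:2206.07337 — 2 statements merged into one kernel-verified Lean document; each statement's English description precedes it below -/
import Mathlib

section
/- Let p be a prime, K a finite extension of ℚ_p with ring of integers 𝔬 and normalized additive valuation ord. Let B ∈ 𝓗_n(𝔬)^{nd}, let 1 ≤ r ≤ n, and let U ∈ GL_n(𝔬) and B' := ᵗU·B·U. Then min_{(𝐢,𝐣)∈𝓘_r×𝓘_r} ord(b^{(r)}_{𝐢,𝐣}(B)) = min_{(𝐢,𝐣)∈𝓘_r×𝓘_r} ord(b^{(r)}_{𝐢,𝐣}(B')); that is, the quantity g_r(B) := min_{(𝐢,𝐣)} ord(b^{(r)}_{𝐢,𝐣}(B)) is invariant under GL_n(𝔬)-equivalence. -/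
open scoped Classical
open Matrix

/-- Strictly increasing sequences of length `r` with values in `Fin n`. -/
abbrev Inc (r n : ℕ) := {f : Fin r → Fin n // ∀ k l : Fin r, k < l → f k < f l}

/-- `ord(b^{(r)}_{i,j}(B))` where `b^{(r)}_{i,j}(B) = 2^(2⌊r/2⌋+1-δ_{i,j}) · det B(i;j)`. -/
noncomputable def bord {K : Type} [Field K] (v : AddValuation K (WithTop ℤ)) {n : ℕ} (r : ℕ)
    (B : Matrix (Fin n) (Fin n) K) (i j : Inc r n) : WithTop ℤ :=
  v ((2 : K) ^ (2 * (r / 2) + 1 - (if i = j then 1 else 0)) * (B.submatrix i.1 j.1).det)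

/-- `g_r(B)`, the minimum of `ord(b^{(r)}_{i,j}(B))` over all pairs `(i,j)`. -/
noncomputable def gmin {K : Type} [Field K] (v : AddValuation K (WithTop ℤ)) {n : ℕ} (r : ℕ)
    (B : Matrix (Fin n) (Fin n) K) : WithTop ℤ :=
  Finset.univ.inf fun q : Inc r n × Inc r n => bord v r B q.1 q.2


open Finset Equiv

lemma Inc.strictMono {r n : ℕ} (f : Inc r n) : StrictMono f.1 := fun _ _ h => f.2 _ _ h

/-- Cauchy–Binet. -/
theorem cauchyBinet {R : Type*} [CommRing R] {r n : ℕ}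
    (A : Matrix (Fin r) (Fin n) R) (C : Matrix (Fin n) (Fin r) R) :
    (A * C).det = ∑ f : Inc r n, (A.submatrix id f.1).det * (C.submatrix f.1 id).det := by
  have step1 : (A * C).det
      = ∑ p : Fin r → Fin n, (∏ i, C (p i) i) * (A.submatrix id p).det := by
    calc (A * C).det
        = ∑ p : Fin r → Fin n, ∑ σ : Perm (Fin r),
            ((Perm.sign σ : ℤ) : R) * ∏ i, A (σ i) (p i) * C (p i) i := by
          simp only [det_apply', mul_apply, prod_univ_sum, mul_sum, Fintype.piFinset_univ]
          rw [Finset.sum_comm]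
      _ = _ := by
          refine Finset.sum_congr rfl fun p _ => ?_
          rw [det_apply', Finset.mul_sum]
          refine Finset.sum_congr rfl fun σ _ => ?_
          simp only [submatrix_apply, id_eq, Finset.prod_mul_distrib]
          ring
  rw [step1]
  rw [← Finset.sum_filter_add_sum_filter_not Finset.univ (fun p => Function.Injective p)]
  have hnotinj : ∑ p ∈ Finset.univ.filter (fun p : Fin r → Fin n => ¬ Function.Injective p),
      (∏ i, C (p i) i) * (A.submatrix id p).det = 0 := by
    refine Finset.sum_eq_zero fun p hp => ?_
    simp only [Finset.mem_filter, Function.Injective] at hp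
    push_neg at hp
    obtain ⟨a, b, hab, hne⟩ := (Finset.mem_filter.mp hp).2
    rw [Matrix.det_zero_of_column_eq hne (fun k => by simp [hab]), mul_zero]
  rw [hnotinj, add_zero]
  rw [show (∑ f : Inc r n, (A.submatrix id f.1).det * (C.submatrix f.1 id).det)
      = ∑ q : Inc r n × Perm (Fin r),
          (∏ i, C (q.1.1 (q.2 i)) i) * (A.submatrix id (q.1.1 ∘ q.2)).det from ?_]
  · -- bijection between injective maps and Inc × Perm
    refine (Finset.sum_bij (fun q _ => q.1.1 ∘ q.2) ?_ ?_ ?_ ?_).symm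
    · intro q _
      simp only [Finset.mem_filter, Finset.mem_univ, true_and]
      exact q.1.strictMono.injective.comp q.2.injective
    · intro a _ b _ h
      have h' : a.1.1 ∘ ⇑a.2 = b.1.1 ∘ ⇑b.2 := h
      have hr : Set.range (a.1.1 ∘ a.2) = Set.range a.1.1 := by
        rw [Set.range_comp, a.2.surjective.range_eq, Set.image_univ]
      have hr' : Set.range (b.1.1 ∘ b.2) = Set.range b.1.1 := by
        rw [Set.range_comp, b.2.surjective.range_eq, Set.image_univ]
      have h1 : a.1.1 = b.1.1 := by
        refine (a.1.strictMono.range_inj b.1.strictMono).mp ?_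
        rw [← hr, ← hr', h']
      have h2 : a.2 = b.2 := by
        refine Equiv.ext fun i => a.1.strictMono.injective ?_
        have := congrFun h' i
        simp only [Function.comp_apply] at this
        rw [this, h1]
      exact Prod.ext (Subtype.ext h1) h2
    · intro p hp
      simp only [Finset.mem_filter, Finset.mem_univ, true_and] at hp
      set s : Finset (Fin n) := Finset.univ.image p with hs
      have hcard : s.card = r := by
        rw [hs, Finset.card_image_of_injective _ hp, Finset.card_univ, Fintype.card_fin]
      set f : Fin r → Fin n := ⇑(s.orderEmbOfFin hcard) with hf
      have hmem : ∀ i, p i ∈ s := fun i => Finset.mem_image_of_mem p (Finset.mem_univ i)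
      set σf : Fin r → Fin r := fun i => (s.orderIsoOfFin hcard).symm ⟨p i, hmem i⟩ with hσf
      have hfσ : ∀ i, f (σf i) = p i := by
        intro i
        have h1 : f (σf i) = ((s.orderIsoOfFin hcard) (σf i) : Fin n) :=
          (Finset.coe_orderIsoOfFin_apply s hcard (σf i)).symm
        rw [h1, hσf]
        simp
      have hσinj : Function.Injective σf := by
        intro a b h
        apply hp
        rw [← hfσ a, ← hfσ b, h]
      refine ⟨⟨⟨f, fun k l h => (s.orderEmbOfFin hcard).strictMono h⟩,
        Equiv.ofBijective σf (Finite.injective_iff_bijective.mp hσinj)⟩,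
        Finset.mem_univ _, ?_⟩
      funext i
      exact hfσ i
    · intro q _
      rfl
  · rw [Fintype.sum_prod_type]
    refine Finset.sum_congr rfl fun f _ => ?_
    have hper : ∀ σ : Perm (Fin r), (A.submatrix id (f.1 ∘ σ)).det
        = ((Perm.sign σ : ℤ) : R) * (A.submatrix id f.1).det := by
      intro σ
      rw [show A.submatrix id (f.1 ∘ σ) = (A.submatrix id f.1).submatrix id σ by
        rw [Matrix.submatrix_submatrix]; rfl]
      exact Matrix.det_permute' σ _
    calc (A.submatrix id f.1).det * (C.submatrix f.1 id).det
        = (∑ σ : Perm (Fin r), ((Perm.sign σ : ℤ) : R) * ∏ i, C (f.1 (σ i)) i)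
            * (A.submatrix id f.1).det := by
          rw [det_apply' (C.submatrix f.1 id)]
          simp only [submatrix_apply, id_eq]
          ring
      _ = ∑ σ : Perm (Fin r), (∏ i, C (f.1 (σ i)) i) * (A.submatrix id (f.1 ∘ σ)).det := by
          rw [Finset.sum_mul]
          refine Finset.sum_congr rfl fun σ _ => ?_
          rw [hper σ]
          ring

section val
variable {K : Type} [Field K] (v : AddValuation K (WithTop ℤ))


lemma v_prod_nonneg {ι : Type*} (s : Finset ι) (f : ι → K) (h : ∀ i ∈ s, 0 ≤ v (f i)) :
    0 ≤ v (∏ i ∈ s, f i) := by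
  induction s using Finset.cons_induction with
  | empty => simp [v.map_one]
  | cons a s ha ih =>
    rw [Finset.prod_cons, v.map_mul]
    have h1 := h a (Finset.mem_cons_self a s)
    have h2 := ih fun i hi => h i (Finset.mem_cons_of_mem hi)
    exact add_nonneg h1 h2

lemma v_det_nonneg {m : ℕ} (M : Matrix (Fin m) (Fin m) K) (h : ∀ i j, 0 ≤ v (M i j)) :
    0 ≤ v M.det := by
  rw [Matrix.det_apply']
  refine v.map_le_sum fun σ _ => ?_
  rw [v.map_mul]
  have h1 : 0 ≤ v ((Equiv.Perm.sign σ : ℤ) : K) := by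
    rcases Int.units_eq_one_or (Equiv.Perm.sign σ) with h | h <;>
      simp [h, v.map_one, v.map_neg]
  have h2 : 0 ≤ v (∏ i, M (σ i) i) := v_prod_nonneg v _ _ fun i _ => h _ _
  exact add_nonneg h1 h2

lemma v_sandwich (a x b : K) (ha : 0 ≤ v a) (hb : 0 ≤ v b) (m : WithTop ℤ) (hx : m ≤ v x) :
    m ≤ v (a * x * b) := by
  rw [v.map_mul, v.map_mul]
  calc m ≤ v x := hx
    _ ≤ v a + v x := le_add_of_nonneg_left ha
    _ ≤ v a + v x + v b := le_add_of_nonneg_right hb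


set_option maxHeartbeats 1000000 in
lemma key_ineq (h2 : 0 ≤ v 2) {n : ℕ} (r : ℕ)
    (B : Matrix (Fin n) (Fin n) K) (hsymm : B.IsSymm)
    (U : Matrix (Fin n) (Fin n) K) (hU : ∀ i j, 0 ≤ v (U i j)) :
    gmin v r B ≤ gmin v r (Uᵀ * B * U) := by
  refine Finset.le_inf fun q _ => ?_
  obtain ⟨i, j⟩ := q
  set E : ℕ := 2 * (r / 2) + 1 with hE
  have hpow : (2 : K) ^ E = 2 * 2 ^ (E - 1) := by
    rw [← pow_succ']
    have hE1 : E - 1 + 1 = E := by omega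
    rw [hE1]
  have hglb : ∀ k l : Inc r n,
      gmin v r B ≤ v ((2 : K) ^ (E - if k = l then 1 else 0) * (B.submatrix k.1 l.1).det) :=
    fun k l => Finset.inf_le (Finset.mem_univ (k, l))
  have hbE : ∀ k l : Inc r n,
      gmin v r B ≤ v ((2 : K) ^ E * (B.submatrix k.1 l.1).det) := by
    intro k l
    by_cases hkl : k = l
    · rw [hpow, mul_assoc, v.map_mul]
      calc gmin v r B ≤ v ((2 : K) ^ (E - 1) * (B.submatrix k.1 l.1).det) := by
            have := hglb k l; rwa [if_pos hkl] at this
        _ ≤ v 2 + v ((2 : K) ^ (E - 1) * (B.submatrix k.1 l.1).det) :=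
            le_add_of_nonneg_left h2
    · have := hglb k l
      rwa [if_neg hkl, Nat.sub_zero] at this
  have hexp : ((Uᵀ * B * U).submatrix i.1 j.1).det
      = ∑ k : Inc r n, (Uᵀ.submatrix i.1 k.1).det *
          ∑ l : Inc r n, (B.submatrix k.1 l.1).det * (U.submatrix l.1 j.1).det := by
    have e1 : (Uᵀ * B * U).submatrix i.1 j.1
        = (Uᵀ.submatrix i.1 id) * ((B * U).submatrix id j.1) := by
      rw [Matrix.mul_assoc]
      exact Matrix.submatrix_mul _ _ i.1 id j.1 Function.bijective_id
    rw [e1, cauchyBinet]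
    refine Finset.sum_congr rfl fun k _ => ?_
    rw [Matrix.submatrix_submatrix, Matrix.submatrix_submatrix]
    simp only [Function.comp_id, Function.id_comp]
    congr 1
    rw [show (B * U).submatrix k.1 j.1 = (B.submatrix k.1 id) * (U.submatrix id j.1) from
      Matrix.submatrix_mul _ _ k.1 id j.1 Function.bijective_id, cauchyBinet]
    refine Finset.sum_congr rfl fun l _ => ?_
    rw [Matrix.submatrix_submatrix, Matrix.submatrix_submatrix]
    simp only [Function.comp_id, Function.id_comp]
  have hUdet : ∀ (a b : Fin r → Fin n), 0 ≤ v (U.submatrix a b).det :=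
    fun a b => v_det_nonneg v _ fun _ _ => hU _ _
  have hUtdet : ∀ (a b : Fin r → Fin n), 0 ≤ v (Uᵀ.submatrix a b).det :=
    fun a b => v_det_nonneg v _ fun _ _ => hU _ _
  show gmin v r B ≤ bord v r (Uᵀ * B * U) i j
  by_cases hij : i = j
  · -- diagonal case
    subst hij
    simp only [bord, eq_self_iff_true, if_true, ← hE]
    set d : Inc r n → K := fun k => (U.submatrix k.1 i.1).det with hd
    have hcd : ∀ k : Inc r n, (Uᵀ.submatrix i.1 k.1).det = d k := by
      intro k
      rw [hd, ← Matrix.transpose_submatrix, Matrix.det_transpose]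
    set t : Inc r n × Inc r n → K :=
      fun q => d q.1 * ((2 : K) ^ (E - 1) * (B.submatrix q.1.1 q.2.1).det) * d q.2 with ht
    have hBsub : ∀ k l : Inc r n, (B.submatrix l.1 k.1).det = (B.submatrix k.1 l.1).det := by
      intro k l
      rw [← Matrix.det_transpose (B.submatrix k.1 l.1), Matrix.transpose_submatrix, hsymm]
    have hmain : (2 : K) ^ (E - 1) * ((Uᵀ * B * U).submatrix i.1 i.1).det
        = ∑ q : Inc r n × Inc r n, t q := by
      rw [hexp, Finset.mul_sum, Fintype.sum_prod_type]
      refine Finset.sum_congr rfl fun k _ => ?_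
      rw [Finset.mul_sum, Finset.mul_sum]
      refine Finset.sum_congr rfl fun l _ => ?_
      simp only [ht, hcd]
      ring
    rw [hmain]
    have hdiagbound : ∀ k : Inc r n, gmin v r B ≤ v (t (k, k)) := by
      intro k
      refine v_sandwich v _ _ _ (hUdet _ _) (hUdet _ _) _ ?_
      have := hglb k k
      rwa [if_pos rfl] at this
    have hdouble : ∀ k l : Inc r n,
        t (k, l) + t (k, l) = d k * ((2 : K) ^ E * (B.submatrix k.1 l.1).det) * d l := by
      intro k l
      simp only [ht, hpow]
      ring
    have hoffbound : ∀ q : Inc r n × Inc r n, gmin v r B ≤ v (t q + t q) := by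
      intro q
      rw [hdouble q.1 q.2]
      exact v_sandwich v _ _ _ (hUdet _ _) (hUdet _ _) _ (hbE q.1 q.2)
    set e : Inc r n ≃ Fin (Fintype.card (Inc r n)) := Fintype.equivFin (Inc r n) with he
    rw [← Finset.sum_filter_add_sum_filter_not Finset.univ (fun q => q.1 = q.2) t]
    have hA : gmin v r B
        ≤ v (∑ q ∈ Finset.univ.filter (fun q : Inc r n × Inc r n => q.1 = q.2), t q) := by
      refine v.map_le_sum fun q hq => ?_
      obtain ⟨q1, q2⟩ := q
      simp only [Finset.mem_filter] at hq
      cases hq.2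
      exact hdiagbound q1
    have hsplit : Finset.univ.filter (fun q : Inc r n × Inc r n => ¬ q.1 = q.2)
        = Finset.univ.filter (fun q => e q.1 < e q.2) ∪ Finset.univ.filter (fun q => e q.2 < e q.1) := by
      ext q
      simp only [Finset.mem_filter, Finset.mem_union, Finset.mem_univ, true_and]
      constructor
      · intro h
        exact lt_or_gt_of_ne fun hc => h (e.injective hc)
      · rintro (h | h) hc
        · rw [hc] at h; exact lt_irrefl _ h
        · rw [hc] at h; exact lt_irrefl _ h
    have hdisj : Disjoint (Finset.univ.filter (fun q : Inc r n × Inc r n => e q.1 < e q.2))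
        (Finset.univ.filter (fun q => e q.2 < e q.1)) := by
      rw [Finset.disjoint_left]
      intro q h1 h2
      simp only [Finset.mem_filter] at h1 h2
      exact absurd h2.2 (lt_asymm h1.2)
    have hswap : ∑ q ∈ Finset.univ.filter (fun q : Inc r n × Inc r n => e q.2 < e q.1), t q
        = ∑ q ∈ Finset.univ.filter (fun q : Inc r n × Inc r n => e q.1 < e q.2), t q := by
      refine Finset.sum_bij' (fun q _ => q.swap) (fun q _ => q.swap) ?_ ?_ ?_ ?_ ?_
      · intro q hq
        simp only [Finset.mem_filter, Finset.mem_univ, true_and] at hq ⊢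
        exact hq
      · intro q hq
        simp only [Finset.mem_filter, Finset.mem_univ, true_and] at hq ⊢
        exact hq
      · intro q _
        exact Prod.swap_swap q
      · intro q _
        exact Prod.swap_swap q
      · intro q hq
        simp only [ht, Prod.fst_swap, Prod.snd_swap]
        rw [hBsub q.1 q.2]
        ring
    have hB : gmin v r B
        ≤ v (∑ q ∈ Finset.univ.filter (fun q : Inc r n × Inc r n => ¬ q.1 = q.2), t q) := by
      rw [hsplit, Finset.sum_union hdisj, hswap, ← Finset.sum_add_distrib]
      exact v.map_le_sum fun q _ => hoffbound q
    exact le_trans (le_min hA hB) (v.map_add _ _)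
  · -- off-diagonal case
    simp only [bord, ← hE]
    rw [if_neg hij, Nat.sub_zero]
    have hmain : (2 : K) ^ E * ((Uᵀ * B * U).submatrix i.1 j.1).det
        = ∑ k : Inc r n, ∑ l : Inc r n,
            (Uᵀ.submatrix i.1 k.1).det * ((2 : K) ^ E * (B.submatrix k.1 l.1).det) *
              (U.submatrix l.1 j.1).det := by
      rw [hexp, Finset.mul_sum]
      refine Finset.sum_congr rfl fun k _ => ?_
      rw [Finset.mul_sum, Finset.mul_sum]
      refine Finset.sum_congr rfl fun l _ => ?_
      ring
    rw [hmain]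
    refine v.map_le_sum fun k _ => v.map_le_sum fun l _ => ?_
    exact v_sandwich v _ _ _ (hUtdet _ _) (hUdet _ _) _ (hbE k l)

end val

theorem statement2 (p : ℕ) [Fact (Nat.Prime p)]
    (K : Type) [Field K] [Algebra ℚ_[p] K] [FiniteDimensional ℚ_[p] K]
    [Algebra ℤ_[p] K] [IsScalarTower ℤ_[p] ℚ_[p] K]
    -- `v` is the additive valuation on `K`, normalized so that `v π = 1`,
    -- whose valuation ring is the ring of integers (= integral closure of ℤ_p) of `K`
    (v : AddValuation K (WithTop ℤ))
    (hv0 : ∀ x : K, v x = ⊤ ↔ x = 0)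
    (hvint : ∀ x : K, 0 ≤ v x ↔ IsIntegral ℤ_[p] x)
    (hvnorm : ∃ π : K, v π = 1)
    (n r : ℕ) (hr1 : 1 ≤ r) (hrn : r ≤ n)
    -- B is a nondegenerate half-integral symmetric matrix over the ring of integers
    (B : Matrix (Fin n) (Fin n) K) (hsymm : B.IsSymm)
    (hdiag : ∀ i, 0 ≤ v (B i i))
    (hoff : ∀ i j, i ≠ j → 0 ≤ v (2 * B i j))
    (hnd : B.det ≠ 0)
    -- U ∈ GL_n(𝔬)
    (U : Matrix (Fin n) (Fin n) K)
    (hU : ∀ i j, 0 ≤ v (U i j))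
    (hUinv : ∃ W : Matrix (Fin n) (Fin n) K,
      (∀ i j, 0 ≤ v (W i j)) ∧ U * W = 1 ∧ W * U = 1) :
    gmin v r B = gmin v r (Uᵀ * B * U) := by
  
  obtain ⟨W, hW, hUW, hWU⟩ := hUinv
  have h2 : 0 ≤ v 2 := by
    rw [hvint]
    have h := isIntegral_algebraMap (R := ℤ_[p]) (A := K) (x := (2 : ℤ_[p]))
    rwa [map_ofNat] at h
  have hsymm' : (Uᵀ * B * U).IsSymm := by
    show (Uᵀ * B * U)ᵀ = Uᵀ * B * U
    simp only [Matrix.transpose_mul, Matrix.transpose_transpose, Matrix.mul_assoc]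
    rw [show Bᵀ = B from hsymm]
  have hback : Wᵀ * (Uᵀ * B * U) * W = B := by
    have h1 : Wᵀ * Uᵀ = 1 := by rw [← Matrix.transpose_mul, hUW, Matrix.transpose_one]
    calc Wᵀ * (Uᵀ * B * U) * W = Wᵀ * Uᵀ * (B * (U * W)) := by
          simp only [Matrix.mul_assoc]
      _ = B := by rw [h1, hUW, Matrix.mul_one, Matrix.one_mul]
  refine le_antisymm (key_ineq v h2 r B hsymm U hU) ?_
  have hle := key_ineq v h2 r (Uᵀ * B * U) hsymm' W hW
  rwa [hback] at hle
end

section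
/- Let H = (a_1,…,a_n; ε_1,…,ε_n) be a naive EGK datum of odd length n ≥ 3 with ε_{n−1} = 0. Write a_i(Y) := a_i(H,Y) and b_i(Y) := a_i(H_{n−1},Y), with the convention b_m(Y) := 0 if m < 0 or m > 𝔢_{n−1}. Then for every 0 ≤ l ≤ 𝔢_n: a_l(Y) = b_l(Y)·Y^l + ε_n·b_{𝔢_n−l}(Y)·Y^{𝔢_n−l}. -/
open scoped Classical

noncomputable section

/-- `𝔢_i` attached to a sequence `a` (1-based index `i`; `a k` is `a_{k+1}`). -/
def eInv (a : ℕ → ℕ) (i : ℕ) : ℕ :=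
  if Odd i then ∑ k ∈ Finset.range i, a k
  else 2 * ((∑ k ∈ Finset.range i, a k) / 2)

/-- A naive EGK datum of length `n`, given by `a k = a_{k+1}` and `ε k = ε_{k+1}`. -/
structure IsNEGK (n : ℕ) (a : ℕ → ℕ) (ε : ℕ → ℤ) : Prop where
  pos : 0 < n
  mono : ∀ i, i + 1 < n → a i ≤ a (i + 1)
  sign : ∀ i, i < n → ε i = 0 ∨ ε i = 1 ∨ ε i = -1
  cond2 : ∀ i, i < n → Odd i → (ε i ≠ 0 ↔ Even (∑ k ∈ Finset.range (i + 1), a k))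
  cond3 : ∀ i, i < n → Even i → ε i ≠ 0
  cond4 : ε 0 = 1
  cond5 : ∀ i, i < n → 2 ≤ i → Even i → Even (∑ k ∈ Finset.range i, a k) →
    ε i = ε (i - 1) ^ (a i + a (i - 1)) * ε (i - 2)

/-- The factors `C` (for even `i`) and `D` (for odd `i`), written in the variables
`u = X^{1/2}`, `v = Y^{1/2}`. -/
def Cfun {K : Type} [Field K] (i : ℕ) (e et : ℕ) (ξ : K) (v u : K) : K :=
  if Even i then
    v ^ et * u ^ (-((e : ℤ) - (et : ℤ)) - 2) * (1 - ξ * (v⁻¹) ^ 2 * u ^ 2) /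
      ((u⁻¹) ^ 2 - u ^ 2)
  else v ^ et * u ^ (-((e : ℤ) - (et : ℤ))) / (1 - ξ * u ^ 2)

/-- The rational function `𝓕(H;Y,X)` of a naive EGK datum of length `N`,
written as a function of `v = Y^{1/2}` and `u = X^{1/2}`. -/
def FF {K : Type} [Field K] (a : ℕ → ℕ) (ε : ℕ → ℤ) : ℕ → K → K → K
  | 0 => fun _ _ => 1
  | 1 => fun _ u => ∑ i ∈ Finset.range (a 0 + 1), u ^ (2 * (i : ℤ) - (a 0 : ℤ))
  | (m + 2) => fun v u =>
      (Cfun (m + 2) (eInv a (m + 2)) (eInv a (m + 1))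
          (if Even (m + 2) then ((ε (m + 1) : ℤ) : K) else ((ε m : ℤ) : K)) v u) *
            FF a ε (m + 1) v (v * u) +
        (if Even (m + 2) then (1 : K) else ((ε (m + 1) : ℤ) : K)) *
          (Cfun (m + 2) (eInv a (m + 2)) (eInv a (m + 1))
            (if Even (m + 2) then ((ε (m + 1) : ℤ) : K) else ((ε m : ℤ) : K)) v u⁻¹) *
            FF a ε (m + 1) v (v * u⁻¹)

/-- The field `ℚ(Y^{1/2})(X^{1/2})` in which the generic identities are stated. -/
abbrev KK : Type := RatFunc (RatFunc ℚ)

/-- The generic point `u = X^{1/2}`. -/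
def uGen : KK := RatFunc.X

/-- The generic point `v = Y^{1/2}`. -/
def vGen : KK := RatFunc.C RatFunc.X

end

/-- `Y^m` (with `m ∈ ℤ`), i.e. `v^{2m}` at the generic point. -/
noncomputable def Yz (m : ℤ) : KK := vGen ^ (2 * m)

/-! ### Auxiliary infrastructure -/

noncomputable section AuxSt12

lemma indep_aux (f : ℕ → RatFunc ℚ) (d : ℕ → ℕ) (m : ℕ)
    (hd : ∀ i < m, ∀ j < m, d i = d j → i = j)
    (h : ∑ k ∈ Finset.range m, RatFunc.C (f k) * RatFunc.X ^ (d k) = (0 : KK)) :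
    ∀ k, k < m → f k = 0 := by
  intro k hk
  have hP : (algebraMap (Polynomial (RatFunc ℚ)) KK)
      (∑ j ∈ Finset.range m, Polynomial.C (f j) * Polynomial.X ^ (d j)) = 0 := by
    rw [map_sum]
    simpa [RatFunc.algebraMap_C, RatFunc.algebraMap_X] using h
  have hP0 : (∑ j ∈ Finset.range m, Polynomial.C (f j) * Polynomial.X ^ (d j)) = 0 :=
    RatFunc.algebraMap_injective _ (by simpa using hP)
  have hc := congrArg (fun p => Polynomial.coeff p (d k)) hP0
  simp only [Polynomial.finset_sum_coeff, Polynomial.coeff_C_mul, Polynomial.coeff_X_pow,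
    mul_ite, mul_one, mul_zero, Polynomial.coeff_zero] at hc
  rwa [Finset.sum_eq_single k (fun j hj hjk => by
    simp only [if_neg (fun hdd : d k = d j => hjk (hd j (Finset.mem_range.mp hj) k hk hdd.symm))])
    (fun hkm => absurd (Finset.mem_range.mpr hk) hkm), if_pos rfl] at hc

lemma uGen_ne_zero : uGen ≠ 0 := RatFunc.X_ne_zero

lemma vGen_ne_zero : vGen ≠ 0 := by
  have h : vGen = algebraMap (Polynomial (RatFunc ℚ)) KK (Polynomial.C RatFunc.X) :=
    (RatFunc.algebraMap_C _).symm
  rw [h, Ne, map_eq_zero_iff _ (RatFunc.algebraMap_injective _)]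
  simp [RatFunc.X_ne_zero]

lemma coeff_ext (f g : ℕ → RatFunc ℚ) (M : ℕ)
    (h : ∑ k ∈ Finset.range M, RatFunc.C (f k) * uGen ^ (2 * k) =
      ∑ k ∈ Finset.range M, RatFunc.C (g k) * uGen ^ (2 * k)) :
    ∀ k, k < M → f k = g k := by
  intro k hk
  have h0 : ∑ j ∈ Finset.range M, RatFunc.C (f j - g j) * RatFunc.X ^ (2 * j) = (0 : KK) := by
    simp only [map_sub, sub_mul, Finset.sum_sub_distrib]
    rw [sub_eq_zero]
    exact h
  exact sub_eq_zero.mp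
    (indep_aux (fun j => f j - g j) (fun j => 2 * j) M
      (fun i _ j _ hij => by omega) h0 k hk)

lemma Cfun_map {K L : Type} [Field K] [Field L] (φ : K →+* L) (i e et : ℕ) (ξ v u : K) :
    φ (Cfun i e et ξ v u) = Cfun i e et (φ ξ) (φ v) (φ u) := by
  by_cases hi : Even i <;>
    simp [Cfun, hi, map_div₀, map_sub, map_mul, map_pow, map_zpow₀, map_one, map_inv₀]

lemma FF_map {K L : Type} [Field K] [Field L] (φ : K →+* L) (a : ℕ → ℕ) (ε : ℕ → ℤ) :
    ∀ (N : ℕ) (v u : K), φ (FF a ε N v u) = FF a ε N (φ v) (φ u)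
  | 0, v, u => by simp [FF]
  | 1, v, u => by simp [FF, map_sum, map_zpow₀]
  | (m + 2), v, u => by
    simp only [FF, map_add, map_mul, map_inv₀, Cfun_map,
      FF_map φ a ε (m + 1) v (v * u), FF_map φ a ε (m + 1) v (v * u⁻¹)]
    by_cases hm : Even (m + 2) <;> simp [hm]

def psi (t : KK) : Polynomial (RatFunc ℚ) →+* KK := Polynomial.eval₂RingHom RatFunc.C t

lemma psi_apply (t : KK) (p : Polynomial (RatFunc ℚ)) :
    psi t p = ∑ k ∈ Finset.range (p.natDegree + 1), RatFunc.C (p.coeff k) * t ^ k := by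
  simp [psi, Polynomial.eval₂_eq_sum_range]

lemma psi1_inj : Function.Injective (psi (vGen * uGen)) := by
  rw [injective_iff_map_eq_zero]
  intro p hp
  rw [psi_apply] at hp
  simp only [vGen, uGen] at hp
  have hp' : ∑ k ∈ Finset.range (p.natDegree + 1),
      RatFunc.C (p.coeff k * RatFunc.X ^ k) * RatFunc.X ^ k = (0 : KK) := by
    rw [← hp]
    refine Finset.sum_congr rfl fun k _ => ?_
    rw [(RatFunc.C : RatFunc ℚ →+* KK).map_mul, (RatFunc.C : RatFunc ℚ →+* KK).map_pow, mul_pow]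
    ring
  have h0 := indep_aux _ (fun k => k) _ (fun i _ j _ hij => hij) hp'
  ext k
  rcases le_or_gt k p.natDegree with hk | hk
  · have := h0 k (by omega)
    rcases mul_eq_zero.mp this with h | h
    · simpa using h
    · exact absurd h (pow_ne_zero _ RatFunc.X_ne_zero)
  · simp [Polynomial.coeff_eq_zero_of_natDegree_lt hk]

lemma psi2_inj : Function.Injective (psi (vGen * uGen⁻¹)) := by
  rw [injective_iff_map_eq_zero]
  intro p hp
  rw [psi_apply] at hp
  simp only [vGen, uGen] at hp
  set N := p.natDegree with hN
  have hp' : ∑ k ∈ Finset.range (N + 1),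
      RatFunc.C (p.coeff k * RatFunc.X ^ k) * RatFunc.X ^ (N - k) = (0 : KK) := by
    have h2 := congrArg (fun x => x * (RatFunc.X : KK) ^ N) hp
    simp only [zero_mul, Finset.sum_mul] at h2
    rw [← h2]
    refine Finset.sum_congr rfl fun k hk => ?_
    have hkN : k ≤ N := Nat.lt_succ_iff.mp (Finset.mem_range.mp hk)
    rw [(RatFunc.C : RatFunc ℚ →+* KK).map_mul, (RatFunc.C : RatFunc ℚ →+* KK).map_pow, mul_pow]
    have hsplit : (RatFunc.X : KK) ^ N = RatFunc.X ^ (N - k) * RatFunc.X ^ k := by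
      rw [← pow_add]; congr 1; omega
    rw [hsplit, inv_pow]
    have hXk : (RatFunc.X : KK) ^ k ≠ 0 := pow_ne_zero _ RatFunc.X_ne_zero
    field_simp
  have h0 := indep_aux _ (fun k => N - k) _
    (fun i hi j hj hij => by omega) hp'
  ext k
  rcases le_or_gt k N with hk | hk
  · have := h0 k (by omega)
    rcases mul_eq_zero.mp this with h | h
    · simpa using h
    · exact absurd h (pow_ne_zero _ RatFunc.X_ne_zero)
  · simp [Polynomial.coeff_eq_zero_of_natDegree_lt hk]

def phi1 : KK →+* KK := IsFractionRing.lift psi1_inj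
def phi2 : KK →+* KK := IsFractionRing.lift psi2_inj

lemma phi1_C (g : RatFunc ℚ) : phi1 (RatFunc.C g) = RatFunc.C g := by
  rw [phi1, ← RatFunc.algebraMap_C, IsFractionRing.lift_algebraMap]
  simp [psi]

lemma phi1_u : phi1 uGen = vGen * uGen := by
  have h := IsFractionRing.lift_algebraMap (K := KK) (L := KK) psi1_inj
    (Polynomial.X : Polynomial (RatFunc ℚ))
  rw [RatFunc.algebraMap_X] at h
  show phi1 RatFunc.X = vGen * uGen
  rw [phi1, h]
  simp [psi]

lemma phi1_v : phi1 vGen = vGen := phi1_C _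

lemma phi2_C (g : RatFunc ℚ) : phi2 (RatFunc.C g) = RatFunc.C g := by
  rw [phi2, ← RatFunc.algebraMap_C, IsFractionRing.lift_algebraMap]
  simp [psi]

lemma phi2_u : phi2 uGen = vGen * uGen⁻¹ := by
  have h := IsFractionRing.lift_algebraMap (K := KK) (L := KK) psi2_inj
    (Polynomial.X : Polynomial (RatFunc ℚ))
  rw [RatFunc.algebraMap_X] at h
  show phi2 RatFunc.X = vGen * uGen⁻¹
  rw [phi2, h]
  simp [psi]

lemma phi2_v : phi2 vGen = vGen := phi2_C _

end AuxSt12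

theorem statement12 (n : ℕ) (a : ℕ → ℕ) (ε : ℕ → ℤ) (h : IsNEGK n a ε)
    (hno : Odd n) (hn3 : 3 ≤ n) (hεn1 : ε (n - 2) = 0)
    (A : ℕ → KK)
    (hA : uGen ^ eInv a n * FF a ε n vGen uGen =
      ∑ i ∈ Finset.range (eInv a n + 1), A i * uGen ^ (2 * i))
    (hAY : ∀ i, ∃ g : RatFunc ℚ, A i = RatFunc.C g)
    (Bz : ℤ → KK)
    (hB : uGen ^ eInv a (n - 1) * FF a ε (n - 1) vGen uGen =
      ∑ i ∈ Finset.range (eInv a (n - 1) + 1), Bz i * uGen ^ (2 * i))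
    (hBY : ∀ m : ℤ, ∃ g : RatFunc ℚ, Bz m = RatFunc.C g)
    (hB0 : ∀ m : ℤ, (m < 0 ∨ (eInv a (n - 1) : ℤ) < m) → Bz m = 0) :
    ∀ l : ℕ, l ≤ eInv a n →
      A l = Bz (l : ℤ) * Yz (l : ℤ) +
        ((ε (n - 1) : ℤ) : KK) *
          (Bz ((eInv a n : ℤ) - l) * Yz ((eInv a n : ℤ) - l)) := by
  obtain ⟨m, rfl⟩ : ∃ m, n = m + 2 := ⟨n - 2, by omega⟩
  simp only [show m + 2 - 1 = m + 1 from rfl, show m + 2 - 2 = m from rfl] at hεn1 hB hB0 ⊢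
  set e := eInv a (m + 2) with he
  set e' := eInv a (m + 1) with he'
  have hne : ¬ Even (m + 2) := by
    rcases hno with ⟨t, ht⟩; rintro ⟨s, hs⟩; omega
  have hm1no : ¬ Odd (m + 1) := by
    rcases hno with ⟨t, ht⟩; rintro ⟨s, hs⟩; omega
  have he'le : e' ≤ e := by
    have h1 : e' = 2 * ((∑ k ∈ Finset.range (m + 1), a k) / 2) := by
      rw [he', eInv, if_neg hm1no]
    have h2 : e = ∑ k ∈ Finset.range (m + 2), a k := by
      rw [he, eInv, if_pos hno]
    have h3 : 2 * ((∑ k ∈ Finset.range (m + 1), a k) / 2) ≤ ∑ k ∈ Finset.range (m + 1), a k := by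
      rw [mul_comm]; exact Nat.div_mul_le_self _ 2
    have h4 : (∑ k ∈ Finset.range (m + 1), a k) ≤ ∑ k ∈ Finset.range (m + 2), a k :=
      Finset.sum_le_sum_of_subset (Finset.range_subset_range.mpr (by omega))
    omega
  -- fixed points of the substitution homomorphisms
  have hBfix1 : ∀ i : ℤ, phi1 (Bz i) = Bz i := fun i => by
    obtain ⟨g, hg⟩ := hBY i; rw [hg, phi1_C]
  have hBfix2 : ∀ i : ℤ, phi2 (Bz i) = Bz i := fun i => by
    obtain ⟨g, hg⟩ := hBY i; rw [hg, phi2_C]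
  -- the two substituted versions of hB
  have hEqP : (vGen * uGen) ^ e' * FF a ε (m + 1) vGen (vGen * uGen)
      = ∑ i ∈ Finset.range (e' + 1), Bz i * (vGen * uGen) ^ (2 * i) := by
    have h1 := congrArg phi1 hB
    rw [map_mul, map_pow, phi1_u, FF_map phi1 a ε (m + 1) vGen uGen, phi1_v, phi1_u,
      map_sum] at h1
    rw [h1]
    exact Finset.sum_congr rfl fun i _ => by rw [map_mul, map_pow, phi1_u, hBfix1 i]
  have hEqQ : (vGen * uGen⁻¹) ^ e' * FF a ε (m + 1) vGen (vGen * uGen⁻¹)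
      = ∑ i ∈ Finset.range (e' + 1), Bz i * (vGen * uGen⁻¹) ^ (2 * i) := by
    have h1 := congrArg phi2 hB
    rw [map_mul, map_pow, phi2_u, FF_map phi2 a ε (m + 1) vGen uGen, phi2_v, phi2_u,
      map_sum] at h1
    rw [h1]
    exact Finset.sum_congr rfl fun i _ => by rw [map_mul, map_pow, phi2_u, hBfix2 i]
  -- values of Cfun at ξ = 0
  have hC1 : Cfun (m + 2) e e' (0 : KK) vGen uGen
      = vGen ^ e' * uGen ^ (-((e : ℤ) - (e' : ℤ))) := by
    simp [Cfun, hne]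
  have hC2 : Cfun (m + 2) e e' (0 : KK) vGen uGen⁻¹
      = vGen ^ e' * uGen ^ ((e : ℤ) - (e' : ℤ)) := by
    simp [Cfun, hne, inv_zpow, ← zpow_neg]
  -- power bookkeeping
  have hkey1 : uGen ^ e * uGen ^ (-((e : ℤ) - (e' : ℤ))) = uGen ^ e' := by
    rw [← zpow_natCast uGen e, ← zpow_natCast uGen e', ← zpow_add₀ uGen_ne_zero]
    congr 1; ring
  have hkey2 : uGen ^ e * uGen ^ ((e : ℤ) - (e' : ℤ)) = uGen ^ (2 * e) * (uGen⁻¹) ^ e' := by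
    have hinv : (uGen⁻¹) ^ e' = uGen ^ (-(e' : ℤ)) := by
      rw [inv_pow, ← zpow_natCast, zpow_neg]
    rw [hinv, ← zpow_natCast uGen e, ← zpow_natCast uGen (2 * e), ← zpow_add₀ uGen_ne_zero,
      ← zpow_add₀ uGen_ne_zero]
    congr 1; push_cast; ring
  -- the main expansion of u^e * FF_n
  have hεK : ((ε m : ℤ) : KK) = 0 := by rw [hεn1]; exact Int.cast_zero
  have hstep : uGen ^ e * FF a ε (m + 2) vGen uGen
      = (vGen * uGen) ^ e' * FF a ε (m + 1) vGen (vGen * uGen)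
        + ((ε (m + 1) : ℤ) : KK) * (uGen ^ (2 * e) *
          ((vGen * uGen⁻¹) ^ e' * FF a ε (m + 1) vGen (vGen * uGen⁻¹))) := by
    simp only [FF, if_neg hne, ← he, ← he', hεK, hC1, hC2]
    rw [mul_add]
    congr 1
    · calc uGen ^ e * (vGen ^ e' * uGen ^ (-((e : ℤ) - (e' : ℤ)))
            * FF a ε (m + 1) vGen (vGen * uGen))
          = (uGen ^ e * uGen ^ (-((e : ℤ) - (e' : ℤ)))) *
            (vGen ^ e' * FF a ε (m + 1) vGen (vGen * uGen)) := by ring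
        _ = uGen ^ e' * (vGen ^ e' * FF a ε (m + 1) vGen (vGen * uGen)) := by rw [hkey1]
        _ = (vGen * uGen) ^ e' * FF a ε (m + 1) vGen (vGen * uGen) := by
            rw [mul_pow]; ring
    · calc uGen ^ e * (((ε (m + 1) : ℤ) : KK) * (vGen ^ e' * uGen ^ ((e : ℤ) - (e' : ℤ)))
            * FF a ε (m + 1) vGen (vGen * uGen⁻¹))
          = ((ε (m + 1) : ℤ) : KK) * ((uGen ^ e * uGen ^ ((e : ℤ) - (e' : ℤ))) *
            (vGen ^ e' * FF a ε (m + 1) vGen (vGen * uGen⁻¹))) := by ring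
        _ = ((ε (m + 1) : ℤ) : KK) * ((uGen ^ (2 * e) * (uGen⁻¹) ^ e') *
            (vGen ^ e' * FF a ε (m + 1) vGen (vGen * uGen⁻¹))) := by rw [hkey2]
        _ = ((ε (m + 1) : ℤ) : KK) * (uGen ^ (2 * e) *
            ((vGen * uGen⁻¹) ^ e' * FF a ε (m + 1) vGen (vGen * uGen⁻¹))) := by
            rw [mul_pow]; ring
  -- sum manipulations
  have hsum1 : ∑ i ∈ Finset.range (e' + 1), Bz i * (vGen * uGen) ^ (2 * i)
      = ∑ l ∈ Finset.range (e + 1), Bz l * vGen ^ (2 * l) * uGen ^ (2 * l) := by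
    rw [Finset.sum_subset
      (show Finset.range (e' + 1) ⊆ Finset.range (e + 1) from
        Finset.range_subset_range.mpr (by omega))
      (fun x _ hx => ?_)]
    · exact Finset.sum_congr rfl fun i _ => by rw [mul_pow, mul_assoc]
    · have h5 : e' < x := by
        rcases Nat.lt_or_ge x (e' + 1) with hc | hc
        · exact absurd (Finset.mem_range.mpr hc) hx
        · omega
      rw [hB0 x (Or.inr (by exact_mod_cast h5)), zero_mul]
  have hsum2 : uGen ^ (2 * e) * ∑ i ∈ Finset.range (e' + 1), Bz i * (vGen * uGen⁻¹) ^ (2 * i)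
      = ∑ l ∈ Finset.range (e + 1), Bz ((e - l : ℕ)) * vGen ^ (2 * (e - l)) * uGen ^ (2 * l) := by
    rw [Finset.mul_sum]
    have hterm : ∀ i ∈ Finset.range (e' + 1),
        uGen ^ (2 * e) * (Bz i * (vGen * uGen⁻¹) ^ (2 * i))
          = Bz i * vGen ^ (2 * i) * uGen ^ (2 * (e - i)) := by
      intro i hi
      have hie : i ≤ e := le_trans (Nat.lt_succ_iff.mp (Finset.mem_range.mp hi)) he'le
      rw [mul_pow, inv_pow]
      have hsplit : uGen ^ (2 * e) = uGen ^ (2 * (e - i)) * uGen ^ (2 * i) := by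
        rw [← pow_add]; congr 1; omega
      rw [hsplit]
      have hui : (uGen) ^ (2 * i) ≠ 0 := pow_ne_zero _ uGen_ne_zero
      field_simp
    rw [Finset.sum_congr rfl hterm]
    rw [Finset.sum_subset
      (show Finset.range (e' + 1) ⊆ Finset.range (e + 1) from
        Finset.range_subset_range.mpr (by omega))
      (fun x _ hx => by
        have h5 : e' < x := by
          rcases Nat.lt_or_ge x (e' + 1) with hc | hc
          · exact absurd (Finset.mem_range.mpr hc) hx
          · omega
        rw [hB0 x (Or.inr (by exact_mod_cast h5)), zero_mul, zero_mul])]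
    rw [← Finset.sum_range_reflect (fun l => Bz ((e - l : ℕ)) * vGen ^ (2 * (e - l))
      * uGen ^ (2 * l)) (e + 1)]
    refine Finset.sum_congr rfl fun i hi => ?_
    have hie : i ≤ e := Nat.lt_succ_iff.mp (Finset.mem_range.mp hi)
    have h1 : e + 1 - 1 - i = e - i := by omega
    have h2 : e - (e - i) = i := by omega
    rw [h1, h2]
  -- choose constant representatives
  choose gA hgA using hAY
  choose gB hgB using hBY
  -- the combined identity
  have hMain : ∑ l ∈ Finset.range (e + 1), RatFunc.C (gA l) * uGen ^ (2 * l)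
      = ∑ l ∈ Finset.range (e + 1),
          RatFunc.C (gB (l : ℤ) * RatFunc.X ^ (2 * l)
            + ((ε (m + 1) : ℤ) : RatFunc ℚ) * (gB ((e - l : ℕ) : ℤ) * RatFunc.X ^ (2 * (e - l))))
          * uGen ^ (2 * l) := by
    have hL : ∑ l ∈ Finset.range (e + 1), RatFunc.C (gA l) * uGen ^ (2 * l)
        = uGen ^ e * FF a ε (m + 2) vGen uGen := by
      rw [hA]; exact Finset.sum_congr rfl fun i _ => by rw [hgA]
    rw [hL, hstep, hEqP, hEqQ, hsum1, hsum2, Finset.mul_sum, ← Finset.sum_add_distrib]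
    refine Finset.sum_congr rfl fun l hl => ?_
    rw [(RatFunc.C : RatFunc ℚ →+* KK).map_add, (RatFunc.C : RatFunc ℚ →+* KK).map_mul,
      (RatFunc.C : RatFunc ℚ →+* KK).map_mul, (RatFunc.C : RatFunc ℚ →+* KK).map_mul,
      (RatFunc.C : RatFunc ℚ →+* KK).map_pow, (RatFunc.C : RatFunc ℚ →+* KK).map_pow,
      map_intCast, ← hgB, ← hgB]
    show Bz (l : ℤ) * vGen ^ (2 * l) * uGen ^ (2 * l)
        + ((ε (m + 1) : ℤ) : KK) * (Bz ((e - l : ℕ)) * vGen ^ (2 * (e - l)) * uGen ^ (2 * l))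
      = (Bz (l : ℤ) * vGen ^ (2 * l)
        + ((ε (m + 1) : ℤ) : KK) * (Bz ((e - l : ℕ) : ℤ) * vGen ^ (2 * (e - l)))) * uGen ^ (2 * l)
    ring
  -- extract coefficients
  intro l hl
  have hcoeff := coeff_ext _ _ (e + 1) hMain l (by omega)
  have hfin : A l = Bz (l : ℤ) * vGen ^ (2 * l)
      + ((ε (m + 1) : ℤ) : KK) * (Bz ((e - l : ℕ) : ℤ) * vGen ^ (2 * (e - l))) := by
    rw [hgA, hcoeff, (RatFunc.C : RatFunc ℚ →+* KK).map_add,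
      (RatFunc.C : RatFunc ℚ →+* KK).map_mul, (RatFunc.C : RatFunc ℚ →+* KK).map_mul,
      (RatFunc.C : RatFunc ℚ →+* KK).map_mul, (RatFunc.C : RatFunc ℚ →+* KK).map_pow,
      (RatFunc.C : RatFunc ℚ →+* KK).map_pow, map_intCast, ← hgB, ← hgB]
    rfl
  rw [hfin]
  have hYz1 : Yz (l : ℤ) = vGen ^ (2 * l) := by
    rw [Yz, show (2 : ℤ) * (l : ℤ) = ((2 * l : ℕ) : ℤ) by omega, zpow_natCast]
  have hYz2 : Yz ((e : ℤ) - l) = vGen ^ (2 * (e - l)) := by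
    rw [Yz, show (2 : ℤ) * ((e : ℤ) - l) = ((2 * (e - l) : ℕ) : ℤ) by omega, zpow_natCast]
  have hcast : ((e - l : ℕ) : ℤ) = (e : ℤ) - l := by omega
  rw [hYz1, hYz2, hcast]
end
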